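/- Let A be an associative unital ℚ-algebra and let (J0, Jp, Jm, P) be an osp(1,2)-realization in A. In the triple tensor product A ⊗ A ⊗ A over ℚ, the elements associated with the subset {1,3} of {1,2,3}, namely J0'' = J0⊗1⊗1 + 1⊗1⊗J0, Jp'' = Jp⊗P⊗P + 1⊗1⊗Jp, Jm'' = Jm⊗P⊗P + 1⊗1⊗Jm, P'' = P⊗1⊗P, form an osp(1,2)-realization in A ⊗ A ⊗ A, i.e. they satisfy all seven osp(1,2) relations. -/

import Mathlib

open scoped TensorProduct

/-- The elements associated with the subset `{1,3}` of `{1,2,3}` form an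
`osp(1,2)`-realization in `A ⊗[ℚ] A ⊗[ℚ] A`. -/
theorem subset_13_is_realization {A : Type*} [Ring A] [Algebra ℚ A]
    (J0 Jp Jm P : A)
    (h1 : J0*Jp - Jp*J0 = Jp)
    (h2 : J0*Jm - Jm*J0 = -Jm)
    (h3 : Jp*Jm + Jm*Jp = 2*J0)
    (h4 : J0*P = P*J0)
    (h5 : Jp*P + P*Jp = 0)
    (h6 : Jm*P + P*Jm = 0)
    (h7 : P^2 = 1) :
    let J0'' : A ⊗[ℚ] (A ⊗[ℚ] A) := J0 ⊗ₜ ((1:A) ⊗ₜ (1:A)) + (1:A) ⊗ₜ ((1:A) ⊗ₜ J0)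
    let Jp'' : A ⊗[ℚ] (A ⊗[ℚ] A) := Jp ⊗ₜ (P ⊗ₜ P) + (1:A) ⊗ₜ ((1:A) ⊗ₜ Jp)
    let Jm'' : A ⊗[ℚ] (A ⊗[ℚ] A) := Jm ⊗ₜ (P ⊗ₜ P) + (1:A) ⊗ₜ ((1:A) ⊗ₜ Jm)
    let P'' : A ⊗[ℚ] (A ⊗[ℚ] A) := P ⊗ₜ ((1:A) ⊗ₜ P)
    J0''*Jp'' - Jp''*J0'' = Jp'' ∧ J0''*Jm'' - Jm''*J0'' = -Jm'' ∧
    Jp''*Jm'' + Jm''*Jp'' = 2*J0'' ∧ J0''*P'' = P''*J0'' ∧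
    Jp''*P'' + P''*Jp'' = 0 ∧ Jm''*P'' + P''*Jm'' = 0 ∧ P''^2 = 1 := by
  
  have hP : P * P = 1 := by rw [← pow_two]; exact h7
  have e1 : J0 * Jp = Jp + Jp * J0 := sub_eq_iff_eq_add.mp h1
  have e2 : J0 * Jm = -Jm + Jm * J0 := sub_eq_iff_eq_add.mp h2
  have e3 : Jp * Jm = 2 * J0 - Jm * Jp := eq_sub_of_add_eq h3
  have e5 : Jp * P = -(P * Jp) := eq_neg_of_add_eq_zero_left h5
  have e6 : Jm * P = -(P * Jm) := eq_neg_of_add_eq_zero_left h6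
  intro J0'' Jp'' Jm'' P''
  refine ⟨?_, ?_, ?_, ?_, ?_, ?_, ?_⟩ <;>
    simp only [J0'', Jp'', Jm'', P'', pow_two, mul_add, add_mul,
      Algebra.TensorProduct.tmul_mul_tmul, one_mul, mul_one, e1, e2, e3, e5, e6, h4, hP,
      two_mul, TensorProduct.tmul_add, TensorProduct.add_tmul, TensorProduct.tmul_sub,
      TensorProduct.sub_tmul, TensorProduct.tmul_neg, TensorProduct.neg_tmul] <;>
    abel
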